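/- Let γ ∈ (0,1) be a real number, N ≥ 2 an integer, and Q_1, …, Q_M probability mass functions on Fin N with subsets D_1, …, D_M ⊆ Fin N. Then there exist nonempty subsets U_1, …, U_M ⊆ Fin N such that for all i ≠ j, |U_i ∩ D_j|/|U_i| ≤ Q_i(D_j) · (1+2γ)·N^γ/(γ·(1 − N^{−γ})), and for all i, |U_i \ D_i|/|U_i| ≤ Q_i(Fin N \ D_i) · (1+2γ)·N^γ/(γ·(1 − N^{−γ})). (In fact, one can choose U_i so that the uniform distribution on U_i is pointwise at most Q_i multiplied by this factor.) -/

import Mathlib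

open Finset

/-- `Q` is a probability mass function on a finite type. -/
def IsPMF {α : Type*} [Fintype α] (Q : α → ℝ) : Prop :=
  (∀ a, 0 ≤ Q a) ∧ ∑ a, Q a = 1


lemma aux_exp (x : ℝ) (hx : 0 ≤ x) : x + x^2 ≤ Real.exp x := by
  have h := Real.sum_le_exp_of_nonneg hx 4
  simp [Finset.sum_range_succ, Nat.factorial] at h
  nlinarith [sq_nonneg (x-2), mul_nonneg hx (sq_nonneg (x-2))]

lemma aux_harm (N : ℕ) : ∑ L ∈ Finset.range N, ((L:ℝ)+1)⁻¹ ≤ 1 + Real.log N := by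
  have h := harmonic_le_one_add_log N
  have : ((harmonic N : ℚ) : ℝ) = ∑ L ∈ Finset.range N, ((L:ℝ)+1)⁻¹ := by
    unfold harmonic
    push_cast
    rfl
  linarith [this ▸ h]

lemma aux_c (γ : ℝ) (hγ0 : 0 < γ) (hγ1 : γ < 1) (N : ℕ) (hN : 2 ≤ N) :
    1 + Real.log N ≤ (1 + 2 * γ) * (N : ℝ) ^ γ / (γ * (1 - (N : ℝ) ^ (-γ))) := by
  have hNpos : (0:ℝ) < N := by positivity
  have hl : 0 < Real.log N := Real.log_pos (by exact_mod_cast hN)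
  set l := Real.log N with hldef
  have hx : 0 < γ * l := mul_pos hγ0 hl
  have hpow : (N:ℝ) ^ γ = Real.exp (γ * l) := by
    rw [Real.rpow_def_of_pos hNpos, mul_comm]
  have hpow' : (N:ℝ) ^ (-γ) = Real.exp (-(γ * l)) := by
    rw [Real.rpow_def_of_pos hNpos]; ring_nf; rw [mul_comm]
  have hE1 : Real.exp (-(γ*l)) < 1 := Real.exp_lt_one_iff.mpr (by linarith)
  have hd : 0 < γ * (1 - (N:ℝ) ^ (-γ)) := by
    rw [hpow']; exact mul_pos hγ0 (by linarith)
  rw [le_div_iff₀ hd]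
  have h1 : 1 - Real.exp (-(γ*l)) ≤ γ*l := by
    have := Real.add_one_le_exp (-(γ*l)); linarith
  have h2 : γ*l + (γ*l)^2 ≤ Real.exp (γ*l) := aux_exp _ hx.le
  rw [hpow, hpow']
  have hE0 : 0 < Real.exp (-(γ*l)) := Real.exp_pos _
  nlinarith [mul_le_mul_of_nonneg_left h1 (show (0:ℝ) ≤ (1+l)*γ by nlinarith),
    mul_pos hγ0 hl, sq_nonneg (γ*l), mul_nonneg (mul_nonneg hγ0.le hl.le) hl.le]

lemma aux_key {N : ℕ} (hN : 2 ≤ N) (Q : Fin N → ℝ) (hQ0 : ∀ a, 0 ≤ Q a)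
    (hQ1 : ∑ a, Q a = 1) {c : ℝ}
    (hc : ∑ L ∈ Finset.range N, ((L:ℝ)+1)⁻¹ ≤ c) :
    ∃ U : Finset (Fin N), U.Nonempty ∧ ∀ k ∈ U, ((U.card:ℝ))⁻¹ ≤ Q k * c := by
  haveI : NeZero N := ⟨by omega⟩
  have hc0 : 0 < c := lt_of_lt_of_le (by
    apply Finset.sum_pos (fun i _ => by positivity)
    exact Finset.nonempty_range_iff.mpr (by omega)) hc
  by_cases hex : ∃ k : Fin N,
      ((Finset.univ.filter (fun k' => Q k ≤ Q k')).card : ℝ)⁻¹ ≤ Q k * c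
  · obtain ⟨k, hk⟩ := hex
    refine ⟨Finset.univ.filter (fun k' => Q k ≤ Q k'), ⟨k, by simp⟩, ?_⟩
    intro k' hk'
    simp only [Finset.mem_filter] at hk'
    exact hk.trans (mul_le_mul_of_nonneg_right hk'.2 hc0.le)
  · push_neg at hex
    exfalso
    set σ := Tuple.sort (fun k : Fin N => -Q k) with hσ
    have hmono := Tuple.monotone_sort (fun k : Fin N => -Q k)
    have hrank : ∀ i : Fin N,
        ((i:ℕ) + 1 : ℝ) ≤ ((Finset.univ.filter (fun k' => Q (σ i) ≤ Q k')).card : ℝ) := by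
      intro i
      have hsub : (Finset.Iic i).image σ ⊆
          Finset.univ.filter (fun k' => Q (σ i) ≤ Q k') := by
        intro k hk
        simp only [Finset.mem_image, Finset.mem_Iic] at hk
        obtain ⟨j, hj, rfl⟩ := hk
        have h2 : -Q (σ j) ≤ -Q (σ i) := hmono hj
        simp only [Finset.mem_filter, Finset.mem_univ, true_and]
        linarith
      have hcard : ((Finset.Iic i).image σ).card = (i:ℕ) + 1 := by
        rw [Finset.card_image_of_injective _ σ.injective, Fin.card_Iic]
      have := Finset.card_le_card hsub
      rw [hcard] at this
      exact_mod_cast this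
    have hlt : c < c := by
      calc c = (∑ a, Q a) * c := by rw [hQ1, one_mul]
        _ = ∑ a, Q a * c := Finset.sum_mul ..
        _ < ∑ a, ((Finset.univ.filter (fun k' => Q a ≤ Q k')).card : ℝ)⁻¹ := by
            apply Finset.sum_lt_sum_of_nonempty Finset.univ_nonempty
            intro i _; exact hex i
        _ = ∑ i, ((Finset.univ.filter (fun k' => Q (σ i) ≤ Q k')).card : ℝ)⁻¹ :=
            (Equiv.sum_comp σ (fun a => ((Finset.univ.filter (fun k' => Q a ≤ Q k')).card : ℝ)⁻¹)).symm
        _ ≤ ∑ i : Fin N, ((i:ℝ)+1)⁻¹ := by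
            apply Finset.sum_le_sum
            intro i _
            exact inv_anti₀ (by positivity) (hrank i)
        _ = ∑ L ∈ Finset.range N, ((L:ℝ)+1)⁻¹ := Fin.sum_univ_eq_sum_range (fun L => ((L:ℝ)+1)⁻¹) N
        _ ≤ c := hc
    exact absurd hlt (lt_irrefl c)

lemma aux_sum {N : ℕ} (Q : Fin N → ℝ) (hQ0 : ∀ a, 0 ≤ Q a) {c : ℝ} (hc : 0 ≤ c)
    {U A : Finset (Fin N)} (hU : U.Nonempty)
    (h : ∀ k ∈ U, ((U.card:ℝ))⁻¹ ≤ Q k * c) :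
    ((U ∩ A).card : ℝ) / ((U.card : ℝ)) ≤ (∑ k ∈ A, Q k) * c := by
  have hcard : (0:ℝ) < U.card := by exact_mod_cast Finset.card_pos.mpr hU
  calc ((U ∩ A).card : ℝ) / (U.card : ℝ)
      = ∑ _k ∈ U ∩ A, ((U.card:ℝ))⁻¹ := by
        rw [Finset.sum_const, nsmul_eq_mul, div_eq_mul_inv]
    _ ≤ ∑ k ∈ U ∩ A, Q k * c := by
        apply Finset.sum_le_sum
        intro k hk
        exact h k (Finset.mem_of_mem_inter_left hk)
    _ ≤ ∑ k ∈ A, Q k * c := by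
        apply Finset.sum_le_sum_of_subset_of_nonneg Finset.inter_subset_right
        intro k _ _
        exact mul_nonneg (hQ0 k) hc
    _ = (∑ k ∈ A, Q k) * c := (Finset.sum_mul ..).symm

/-- From general encoding distributions to uniform encoding distributions over the
noiseless channel `NL_[N]`: given `γ ∈ (0,1)` and an `(N, M)` ID code `(Q_i, D_i)`, there
are nonempty supports `U_i` such that the uniform distribution on `U_i` is pointwise at
most `Q_i` times the factor `(1+2γ)·N^γ/(γ·(1-N^{-γ}))`; consequently all error
probabilities grow by at most this factor. -/
theorem generalToUniformEncoders (γ : ℝ) (hγ : γ ∈ Set.Ioo (0 : ℝ) 1)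
    (N M : ℕ) (hN : 2 ≤ N) (hM : 1 ≤ M)
    (Q : Fin M → Fin N → ℝ) (hQ : ∀ i, IsPMF (Q i))
    (D : Fin M → Finset (Fin N)) :
    ∃ U : Fin M → Finset (Fin N),
      (∀ i, (U i).Nonempty) ∧
      (∀ i, ∀ k ∈ U i,
        ((U i).card : ℝ)⁻¹ ≤
          Q i k * ((1 + 2 * γ) * (N : ℝ) ^ γ / (γ * (1 - (N : ℝ) ^ (-γ))))) ∧
      (∀ i j, i ≠ j →
        ((U i ∩ D j).card : ℝ) / ((U i).card : ℝ) ≤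
          (∑ k ∈ D j, Q i k) * ((1 + 2 * γ) * (N : ℝ) ^ γ / (γ * (1 - (N : ℝ) ^ (-γ))))) ∧
      (∀ i,
        ((U i \ D i).card : ℝ) / ((U i).card : ℝ) ≤
          (∑ k ∈ Finset.univ \ D i, Q i k) *
            ((1 + 2 * γ) * (N : ℝ) ^ γ / (γ * (1 - (N : ℝ) ^ (-γ))))) := by
  obtain ⟨hγ0, hγ1⟩ := hγ
  set c : ℝ := (1 + 2 * γ) * (N : ℝ) ^ γ / (γ * (1 - (N : ℝ) ^ (-γ))) with hcdef
  have hc : ∑ L ∈ Finset.range N, ((L:ℝ)+1)⁻¹ ≤ c :=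
    (aux_harm N).trans (aux_c γ hγ0 hγ1 N hN)
  choose U hU1 hU2 using fun i => aux_key hN (Q i) (hQ i).1 (hQ i).2 hc
  have hc0 : 0 ≤ c := le_trans (Finset.sum_nonneg fun i _ => by positivity) hc
  refine ⟨U, hU1, hU2, ?_, ?_⟩
  · intro i j _
    exact aux_sum (Q i) (hQ i).1 hc0 (hU1 i) (hU2 i)
  · intro i
    have hEq : U i \ D i = U i ∩ (Finset.univ \ D i) := by
      ext k; simp
    rw [hEq]
    exact aux_sum (Q i) (hQ i).1 hc0 (hU1 i) (hU2 i)
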